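/- arXiv:1408.5609 — 3 statements merged into one kernel-verified Lean document; each statement's English description precedes it below -/
import Mathlib

section
/- Let f : ℝ → ℝ be bounded and uniformly continuous, and let χ ∈ L¹(ℝ) be a bounded kernel satisfying ∫_ℝ χ(z - t) dt = 1 for all z, sup_z ∫_ℝ |χ(z - t)| dt < ∞, and for every γ > 0, lim_{w→∞} ∫_{|z-t| ≥ γ} |χ_w(z-t)| dt = 0 uniformly in z, where χ_w(u) = w χ(w u). Then the Kantorovich convolution operators S_w f(z) = ∫_ℝ χ_w(z - t) ( (w/2) ∫_{t-1/w}^{t+1/w} f(u) du ) dt converge to f uniformly on ℝ as w → ∞. -/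
open MeasureTheory Filter

/-- uniform convergence of Kantorovich convolution operators
built from the scaled kernel `χ_w(u) = w χ(w u)` for bounded uniformly
continuous `f`. -/
theorem kantorovich_convolution_uniform_convergence
    (f χ : ℝ → ℝ)
    (hf_bdd : ∃ C, ∀ x, |f x| ≤ C)
    (hf_uc : UniformContinuous f)
    (hχ_int : Integrable χ)
    (hχ_bdd : ∃ K, ∀ u, |χ u| ≤ K)
    (hχ_norm : ∀ z : ℝ, ∫ t, χ (z - t) = 1)
    (hχ_abs : ∃ M : ℝ, ∀ z : ℝ, ∫ t, |χ (z - t)| ≤ M)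
    (hχ_conc : ∀ γ > (0:ℝ), ∀ ε > (0:ℝ), ∃ W : ℝ, ∀ w ≥ W, ∀ z : ℝ,
      ∫ t in {t : ℝ | γ ≤ |z - t|}, |w * χ (w * (z - t))| < ε) :
    ∀ ε > (0:ℝ), ∃ W : ℝ, ∀ w ≥ W, ∀ z : ℝ,
      |(∫ t, (w * χ (w * (z - t))) *
          ((w / 2) * ∫ u in Set.Icc (t - 1 / w) (t + 1 / w), f u)) - f z| < ε := by
  obtain ⟨C, hC⟩ := hf_bdd
  have hC0 : 0 ≤ C := (abs_nonneg _).trans (hC 0)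
  obtain ⟨M, hM⟩ := hχ_abs
  have hf_cont : Continuous f := hf_uc.continuous
  have hχM : ∫ u, |χ u| ≤ M := by
    have h := hM 0
    rwa [integral_sub_left_eq_self (fun u => |χ u|) volume 0] at h
  have hM0 : 0 ≤ M := le_trans (integral_nonneg fun t => abs_nonneg _) hχM
  have hχ1 : ∫ u, χ u = 1 := by
    have h := hχ_norm 0
    rwa [integral_sub_left_eq_self χ volume 0] at h
  intro ε hε
  obtain ⟨δ, hδ0, hδ⟩ := Metric.uniformContinuous_iff.mp hf_uc (ε / (2 * (M + 1)))
    (by positivity)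
  set γ := δ / 2 with hγdef
  have hγ0 : 0 < γ := by positivity
  obtain ⟨W₀, hW₀⟩ := hχ_conc γ hγ0 (ε / (4 * (C + 1))) (by positivity)
  refine ⟨max W₀ (max (1 / γ) 1), fun w hw z => ?_⟩
  have hw1 : (1:ℝ) ≤ w := le_trans ((le_max_right (1/γ) 1).trans (le_max_right W₀ _)) hw
  have hw0 : (0:ℝ) < w := lt_of_lt_of_le one_pos hw1
  have hwW₀ : W₀ ≤ w := (le_max_left _ _).trans hw
  have h1γ : 1 / γ ≤ w := le_trans ((le_max_left (1/γ) 1).trans (le_max_right W₀ _)) hw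
  have hwγ : 1 / w ≤ γ := by
    rw [div_le_iff₀ hw0]
    rw [div_le_iff₀ hγ0] at h1γ
    nlinarith
  -- the scaled kernel
  set g : ℝ → ℝ := fun t => w * χ (w * (z - t)) with hgdef
  have hg_int : Integrable g := by
    have h1 : Integrable (fun t => χ (w * t)) := hχ_int.comp_mul_left' hw0.ne'
    have h2 : Integrable (fun t => χ (w * (z - t))) := h1.comp_sub_left z
    exact h2.const_mul w
  -- integral of scaled kernel is 1
  have hone : ∫ t, g t = 1 := by
    have h1 : (∫ t, χ (w * (z - t))) = ∫ t, χ (w * t) :=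
      integral_sub_left_eq_self (fun t => χ (w * t)) volume z
    have h2 : (∫ t : ℝ, χ (w * t)) = |w⁻¹| • ∫ u, χ u := Measure.integral_comp_mul_left χ w
    simp only [hgdef]
    rw [integral_const_mul, h1, h2, hχ1, smul_eq_mul, abs_of_pos (inv_pos.2 hw0)]
    field_simp
  -- integral of |g| is ∫ |χ| ≤ M
  have habs : ∫ t, |g t| ≤ M := by
    have heq : ∀ t, |g t| = w * |χ (w * (z - t))| := by
      intro t
      rw [hgdef, abs_mul, abs_of_pos hw0]
    have h1 : (∫ t, |χ (w * (z - t))|) = ∫ t, |χ (w * t)| :=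
      integral_sub_left_eq_self (fun t => |χ (w * t)|) volume z
    have h2 : (∫ t : ℝ, |χ (w * t)|) = |w⁻¹| • ∫ u, |χ u| :=
      Measure.integral_comp_mul_left (fun u => |χ u|) w
    calc ∫ t, |g t| = ∫ t, w * |χ (w * (z - t))| := by simp_rw [heq]
      _ = w * ∫ t, |χ (w * (z - t))| := integral_const_mul _ _
      _ = w * (|w⁻¹| * ∫ u, |χ u|) := by rw [h1, h2, smul_eq_mul]
      _ = ∫ u, |χ u| := by
          rw [abs_of_pos (inv_pos.2 hw0)]; field_simp
      _ ≤ M := hχM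
  have hgabs_int : Integrable (fun t => |g t|) := hg_int.abs
  -- the Kantorovich means
  set F : ℝ → ℝ := fun t => (w / 2) * ∫ u in Set.Icc (t - 1 / w) (t + 1 / w), f u with hFdef
  have hle : ∀ t : ℝ, t - 1 / w ≤ t + 1 / w := by
    intro t; have : (0:ℝ) < 1 / w := by positivity
    linarith
  have hFcont : Continuous F := by
    have hprim : Continuous (fun b => ∫ u in (0:ℝ)..b, f u) :=
      intervalIntegral.continuous_primitive (fun a b => hf_cont.intervalIntegrable a b) 0
    have hFeq : ∀ t : ℝ, F t
        = (w / 2) * ((∫ u in (0:ℝ)..(t + 1 / w), f u) - ∫ u in (0:ℝ)..(t - 1 / w), f u) := by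
      intro t
      simp only [hFdef]
      congr 1
      rw [MeasureTheory.integral_Icc_eq_integral_Ioc, ← intervalIntegral.integral_of_le (hle t),
        intervalIntegral.integral_interval_sub_left (hf_cont.intervalIntegrable 0 (t + 1 / w))
          (hf_cont.intervalIntegrable 0 (t - 1 / w))]
    rw [show F = fun t => (w / 2) *
        ((∫ u in (0:ℝ)..(t + 1 / w), f u) - ∫ u in (0:ℝ)..(t - 1 / w), f u) from funext hFeq]
    exact continuous_const.mul
      ((hprim.comp (continuous_id.add continuous_const)).sub
        (hprim.comp (continuous_id.sub continuous_const)))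
  have hvol : ∀ t : ℝ, (volume (Set.Icc (t - 1 / w) (t + 1 / w))).toReal = 2 / w := by
    intro t
    rw [Real.volume_Icc, ENNReal.toReal_ofReal (by linarith [hle t])]
    ring
  have hvol_fin : ∀ t : ℝ, volume (Set.Icc (t - 1 / w) (t + 1 / w)) < ⊤ :=
    fun t => measure_Icc_lt_top
  -- the mean differs from f z by the modulus of continuity
  have hFdiff : ∀ t : ℝ, F t - f z
      = (w / 2) * ∫ u in Set.Icc (t - 1 / w) (t + 1 / w), (f u - f z) := by
    intro t
    rw [integral_sub hf_cont.integrableOn_Icc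
      (integrableOn_const (hvol_fin t).ne), setIntegral_const, measureReal_def, hvol t, smul_eq_mul]
    simp only [hFdef]
    field_simp
  -- bound on F
  have hFbound : ∀ t : ℝ, |F t| ≤ C := by
    intro t
    have h := norm_setIntegral_le_of_norm_le_const (μ := volume)
      (s := Set.Icc (t - 1 / w) (t + 1 / w)) (f := f) (C := C) (hvol_fin t)
      (fun x _ => hC x)
    rw [measureReal_def, hvol t] at h
    simp only [hFdef]
    rw [abs_mul, abs_of_pos (by positivity : (0:ℝ) < w / 2)]
    calc w / 2 * |∫ u in Set.Icc (t - 1 / w) (t + 1 / w), f u| ≤ w / 2 * (C * (2 / w)) := by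
          apply mul_le_mul_of_nonneg_left _ (by positivity)
          exact h
      _ = C := by field_simp
  have hFdiffbound : ∀ t : ℝ, |F t - f z| ≤ 2 * C := by
    intro t
    calc |F t - f z| ≤ |F t| + |f z| := abs_sub _ _
      _ ≤ C + C := add_le_add (hFbound t) (hC z)
      _ = 2 * C := by ring
  -- small mean difference when t is close to z
  have hFclose : ∀ t : ℝ, |z - t| < γ → |F t - f z| ≤ ε / (2 * (M + 1)) := by
    intro t ht
    rw [hFdiff t]
    have h := norm_setIntegral_le_of_norm_le_const (μ := volume)
      (s := Set.Icc (t - 1 / w) (t + 1 / w)) (f := fun u => f u - f z)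
      (C := ε / (2 * (M + 1))) (hvol_fin t) ?_
    · rw [measureReal_def, hvol t] at h
      rw [abs_mul, abs_of_pos (by positivity : (0:ℝ) < w / 2)]
      calc w / 2 * |∫ u in Set.Icc (t - 1 / w) (t + 1 / w), (f u - f z)|
          ≤ w / 2 * (ε / (2 * (M + 1)) * (2 / w)) :=
            mul_le_mul_of_nonneg_left h (by positivity)
        _ = ε / (2 * (M + 1)) := by field_simp
    · intro x hx
      have hxz : dist x z < δ := by
        obtain ⟨hx1, hx2⟩ := hx
        rw [Real.dist_eq]
        have h1 : |x - t| ≤ 1 / w := by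
          rw [abs_le]; constructor <;> linarith
        have h2 : |t - z| < γ := by rwa [abs_sub_comm]
        calc |x - z| ≤ |x - t| + |t - z| := abs_sub_le _ _ _
          _ < 1 / w + γ := by
              apply add_lt_add_of_le_of_lt h1 h2
          _ ≤ γ + γ := by linarith
          _ = δ := by rw [hγdef]; ring
      have := hδ hxz
      rw [Real.dist_eq] at this
      exact le_of_lt this
  -- integrability of the main integrand
  have hmain_int : Integrable (fun t => g t * F t) := by
    have h := Integrable.bdd_mul hg_int hFcont.aestronglyMeasurable (Eventually.of_forall fun t => hFbound t)
    exact h.congr (Eventually.of_forall fun t => mul_comm _ _)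
  have hmain_int2 : Integrable (fun t => g t * (F t - f z)) := by
    have h := Integrable.bdd_mul hg_int (hFcont.sub continuous_const).aestronglyMeasurable
      (Eventually.of_forall fun t => hFdiffbound t)
    exact h.congr (Eventually.of_forall fun t => mul_comm _ _)
  -- rewrite difference
  have hsub : (∫ t, g t * F t) - f z = ∫ t, g t * (F t - f z) := by
    have h1 : ∀ t, g t * (F t - f z) = g t * F t - f z * g t := by intro t; ring
    simp_rw [h1]
    rw [integral_sub hmain_int (hg_int.const_mul (f z)), integral_const_mul, hone, mul_one]
  -- now the estimate
  have hSmeas : MeasurableSet {t : ℝ | γ ≤ |z - t|} := by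
    have : Continuous fun t : ℝ => |z - t| := (continuous_const.sub continuous_id).abs
    exact measurableSet_le measurable_const this.measurable
  set s : Set ℝ := {t : ℝ | γ ≤ |z - t|} with hsdef
  have habs_int2 : Integrable (fun t => |g t| * |F t - f z|) := by
    have h := Integrable.bdd_mul hgabs_int
      ((hFcont.sub continuous_const).abs.aestronglyMeasurable)
      (Eventually.of_forall fun t => by simpa [abs_abs] using hFdiffbound t)
    exact h.congr (Eventually.of_forall fun t => mul_comm _ _)
  have hsplit : ∫ t, |g t| * |F t - f z|
      = (∫ t in s, |g t| * |F t - f z|) + ∫ t in sᶜ, |g t| * |F t - f z| :=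
    (integral_add_compl hSmeas habs_int2).symm
  -- far part
  have hfar : ∫ t in s, |g t| * |F t - f z| ≤ 2 * C * (ε / (4 * (C + 1))) := by
    have hfar0 : ∫ t in s, |g t| ≤ ε / (4 * (C + 1)) := by
      have := hW₀ w hwW₀ z
      have heq : ∀ t, |w * χ (w * (z - t))| = |g t| := fun t => rfl
      simp_rw [heq] at this
      exact le_of_lt this
    calc ∫ t in s, |g t| * |F t - f z| ≤ ∫ t in s, |g t| * (2 * C) := by
          apply setIntegral_mono_on (habs_int2.integrableOn)
            ((hgabs_int.const_mul (2 * C)).congr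
              (Eventually.of_forall fun t => mul_comm _ _) |>.integrableOn) hSmeas
          intro t _
          exact mul_le_mul_of_nonneg_left (hFdiffbound t) (abs_nonneg _)
      _ = 2 * C * ∫ t in s, |g t| := by
          rw [← integral_const_mul]
          congr 1; funext t; ring
      _ ≤ 2 * C * (ε / (4 * (C + 1))) :=
          mul_le_mul_of_nonneg_left hfar0 (by positivity)
  -- near part
  have hnear : ∫ t in sᶜ, |g t| * |F t - f z| ≤ ε / (2 * (M + 1)) * M := by
    calc ∫ t in sᶜ, |g t| * |F t - f z| ≤ ∫ t in sᶜ, |g t| * (ε / (2 * (M + 1))) := by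
          apply setIntegral_mono_on (habs_int2.integrableOn)
            ((hgabs_int.const_mul _).congr
              (Eventually.of_forall fun t => mul_comm _ _) |>.integrableOn) hSmeas.compl
          intro t ht
          have : |z - t| < γ := by
            simpa [hsdef, not_le] using ht
          exact mul_le_mul_of_nonneg_left (hFclose t this) (abs_nonneg _)
      _ = ε / (2 * (M + 1)) * ∫ t in sᶜ, |g t| := by
          rw [← integral_const_mul]
          congr 1; funext t; ring
      _ ≤ ε / (2 * (M + 1)) * M := by
          apply mul_le_mul_of_nonneg_left _ (by positivity)
          calc ∫ t in sᶜ, |g t| ≤ ∫ t, |g t| :=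
                setIntegral_le_integral hgabs_int (Eventually.of_forall fun t => abs_nonneg _)
            _ ≤ M := habs
  -- put everything together
  have hfinal : |(∫ t, g t * F t) - f z| ≤ 2 * C * (ε / (4 * (C + 1))) + ε / (2 * (M + 1)) * M := by
    rw [hsub]
    calc |∫ t, g t * (F t - f z)| ≤ ∫ t, |g t| * |F t - f z| := by simpa [abs_mul] using norm_integral_le_integral_norm (μ := volume) (fun t => g t * (F t - f z))
      _ = (∫ t in s, |g t| * |F t - f z|) + ∫ t in sᶜ, |g t| * |F t - f z| := hsplit
      _ ≤ 2 * C * (ε / (4 * (C + 1))) + ε / (2 * (M + 1)) * M := add_le_add hfar hnear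
  have h2 : 2 * C * (ε / (4 * (C + 1))) + ε / (2 * (M + 1)) * M < ε := by
    have hc1 : 2 * C * (ε / (4 * (C + 1))) < ε / 2 := by
      have he : 2 * C * (ε / (4 * (C + 1))) = (C / (C + 1)) * (ε / 2) := by
        field_simp; ring
      have hlt : C / (C + 1) < 1 := (div_lt_one (by positivity)).2 (by linarith)
      calc 2 * C * (ε / (4 * (C + 1))) = (C / (C + 1)) * (ε / 2) := he
        _ < 1 * (ε / 2) := mul_lt_mul_of_pos_right hlt (by positivity)
        _ = ε / 2 := one_mul _
    have hc2 : ε / (2 * (M + 1)) * M < ε / 2 := by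
      have he : ε / (2 * (M + 1)) * M = (M / (M + 1)) * (ε / 2) := by
        field_simp
      have hlt : M / (M + 1) < 1 := (div_lt_one (by positivity)).2 (by linarith)
      calc ε / (2 * (M + 1)) * M = (M / (M + 1)) * (ε / 2) := he
        _ < 1 * (ε / 2) := mul_lt_mul_of_pos_right hlt (by positivity)
        _ = ε / 2 := one_mul _
    linarith
  exact lt_of_le_of_lt hfinal h2
end

section
/- Let φ : [0,∞) → [0,∞) be a convex function with φ(0) = 0, φ(u) > 0 for u > 0, φ nondecreasing and φ(u) → ∞. Let f : ℝ → ℝ be continuous with compact support, and let (χ_w)_{w>0} be kernels on ℝ satisfying: ∫_ℝ χ_w(z - t) dt = 1 for all z; sup_z ∫_ℝ |χ_w(z - t)| dt ≤ M; for every γ > 0, ∫_{|z-t|≥γ} |χ_w(z-t)| dt → 0 uniformly in z; and for every ε > 0 and γ > 0 there is R > 0 such that ∫_{|z| ≥ R} |χ_w(z - t)| dz < ε for all large w and all t ∈ [-γ, γ]. Then for every λ > 0, ∫_ℝ φ(λ |S_w f(z) − f(z)|) dz → 0 as w → ∞, where S_w f(z) = ∫_ℝ χ_w(z - t)( (w/2)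 ∫_{t-1/w}^{t+1/w} f(u) du ) dt. -/
open MeasureTheory Filter

set_option maxHeartbeats 1000000 in
/-- Luxemburg-norm (modular, for every `λ > 0`) convergence of
Kantorovich convolution operators for continuous compactly supported `f`. -/
theorem kantorovich_convolution_orlicz_convergence
    (φ : ℝ → ℝ) (f : ℝ → ℝ) (χw : ℝ → ℝ → ℝ) (M : ℝ)
    (hφ_conv : ConvexOn ℝ (Set.Ici 0) φ)
    (hφ0 : φ 0 = 0) (hφ_pos : ∀ u > (0:ℝ), 0 < φ u)
    (hφ_mono : MonotoneOn φ (Set.Ici 0))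
    (hφ_infty : Tendsto φ atTop atTop)
    (hf_cont : Continuous f) (hf_supp : HasCompactSupport f)
    (hχ_norm : ∀ w > (0:ℝ), ∀ z : ℝ, ∫ t, χw w (z - t) = 1)
    (hχ_abs : ∀ w > (0:ℝ), ∀ z : ℝ, ∫ t, |χw w (z - t)| ≤ M)
    (hχ_conc : ∀ γ > (0:ℝ), ∀ ε > (0:ℝ), ∃ W : ℝ, ∀ w ≥ W, ∀ z : ℝ,
      ∫ t in {t : ℝ | γ ≤ |z - t|}, |χw w (z - t)| < ε)
    (hχ_tail : ∀ ε > (0:ℝ), ∀ γ > (0:ℝ), ∃ R > (0:ℝ), ∃ W : ℝ, ∀ w ≥ W,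
      ∀ t ∈ Set.Icc (-γ) γ, ∫ z in {z : ℝ | R ≤ |z|}, |χw w (z - t)| < ε) :
    ∀ lam > (0:ℝ),
      Tendsto (fun w : ℝ =>
        ∫ z : ℝ, φ (lam * |(∫ t, χw w (z - t) *
          ((w / 2) * ∫ u in Set.Icc (t - 1 / w) (t + 1 / w), f u)) - f z|))
        atTop (nhds 0) := by
  classical
  intro lam hlam
  -- bound for f
  obtain ⟨x₀, hx₀⟩ := (hf_cont.norm).exists_forall_ge_of_hasCompactSupport hf_supp.norm
  set Nf : ℝ := ‖f x₀‖ + 1 with hNf_def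
  have hNf : ∀ x, |f x| ≤ Nf := by
    intro x
    have := hx₀ x
    rw [Real.norm_eq_abs] at this
    simp only [hNf_def]
    linarith
  have hNf0 : 0 < Nf := by
    have := norm_nonneg (f x₀)
    simp only [hNf_def]; linarith
  -- support radius
  obtain ⟨r, hr⟩ := (IsCompact.isBounded hf_supp).subset_closedBall 0
  set ρ : ℝ := |r| with hρ_def
  have hf0 : ∀ x : ℝ, ρ < |x| → f x = 0 := by
    intro x hx
    apply image_eq_zero_of_notMem_tsupport
    intro hmem
    have h1 := hr hmem
    rw [Metric.mem_closedBall, Real.dist_eq, sub_zero] at h1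
    exact absurd (h1.trans (le_abs_self r)) (not_le.2 hx)
  set γ1 : ℝ := ρ + 2 with hγ1_def
  have hρ0 : 0 ≤ ρ := abs_nonneg r
  have hγ1 : 0 < γ1 := by simp only [hγ1_def]; linarith
  -- uniform continuity
  have huc := Metric.uniformContinuous_iff.1
    (hf_supp.uniformContinuous_of_continuous hf_cont)
  -- M' := max M 1
  set M' : ℝ := max M 1 with hM'_def
  have hM'1 : (1:ℝ) ≤ M' := le_max_right _ _
  have hM'0 : 0 < M' := lt_of_lt_of_le one_pos hM'1
  have hMM' : M ≤ M' := le_max_left _ _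
  -- φ is nonnegative on [0,∞)
  have hφ_nonneg : ∀ u : ℝ, 0 ≤ u → 0 ≤ φ u := by
    intro u hu
    have := hφ_mono (Set.mem_Ici.2 le_rfl) (Set.mem_Ici.2 hu) hu
    rwa [hφ0] at this
  -- convex scaling
  have hφ_scale : ∀ x : ℝ, 0 ≤ x → ∀ s : ℝ, 0 ≤ s → s ≤ 1 → φ (s * x) ≤ s * φ x := by
    intro x hx s hs hs1
    have h := hφ_conv.2 (Set.mem_Ici.2 hx) (Set.mem_Ici.2 (le_refl (0:ℝ))) hs
      (by linarith : (0:ℝ) ≤ 1 - s) (by ring)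
    simp only [smul_eq_mul, mul_zero, add_zero, hφ0] at h
    linarith
  -- basic integrability
  have hIntz : ∀ w : ℝ, 0 < w → ∀ z : ℝ, Integrable (fun t => χw w (z - t)) := by
    intro w hw z
    by_contra h
    have h1 := hχ_norm w hw z
    rw [integral_undef h] at h1
    norm_num at h1
  have hIntχ : ∀ w : ℝ, 0 < w → Integrable (χw w) := by
    intro w hw
    have h0 := hIntz w hw 0
    simp only [zero_sub] at h0
    have := h0.comp_neg
    simpa using this
  have hIntz' : ∀ w : ℝ, 0 < w → ∀ t : ℝ, Integrable (fun z => χw w (z - t)) :=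
    fun w hw t => (hIntχ w hw).comp_sub_right t
  -- product measurability
  have hmes : ∀ w : ℝ, 0 < w → AEStronglyMeasurable
      (fun p : ℝ × ℝ => χw w (p.1 - p.2)) ((volume : Measure ℝ).prod volume) := by
    intro w hw
    exact (hIntχ w hw).aestronglyMeasurable.comp_quasiMeasurePreserving
      (quasiMeasurePreserving_sub_of_right_invariant volume volume)
  -- f is integrable
  have hfint : Integrable f := hf_cont.integrable_of_hasCompactSupport hf_supp
  -- the Kantorovich means: continuity
  have hKcont : ∀ w : ℝ, 0 < w → Continuous
      (fun t : ℝ => (w / 2) * ∫ u in Set.Icc (t - 1 / w) (t + 1 / w), f u) := by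
    intro w hw
    have hle : ∀ t : ℝ, t - 1 / w ≤ t + 1 / w := by
      intro t
      have h1 : 0 < 1 / w := by positivity
      linarith
    have heq : ∀ t : ℝ, (∫ u in Set.Icc (t - 1 / w) (t + 1 / w), f u)
        = (∫ u in (0:ℝ)..(t + 1 / w), f u) - ∫ u in (0:ℝ)..(t - 1 / w), f u := by
      intro t
      rw [integral_Icc_eq_integral_Ioc, ← intervalIntegral.integral_of_le (hle t),
        ← intervalIntegral.integral_interval_sub_left hfint.intervalIntegrable
          hfint.intervalIntegrable]
    have hprim : Continuous (fun b : ℝ => ∫ u in (0:ℝ)..b, f u) :=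
      intervalIntegral.continuous_primitive (fun a b => hfint.intervalIntegrable) 0
    have hc : Continuous (fun t : ℝ =>
        (∫ u in (0:ℝ)..(t + 1 / w), f u) - ∫ u in (0:ℝ)..(t - 1 / w), f u) :=
      (hprim.comp (continuous_id.add continuous_const)).sub
        (hprim.comp (continuous_id.sub continuous_const))
    simp only [heq]
    exact continuous_const.mul hc
  have hvol : ∀ w : ℝ, 0 < w → ∀ t : ℝ,
      volume (Set.Icc (t - 1 / w) (t + 1 / w)) = ENNReal.ofReal (2 / w) := by
    intro w hw t
    rw [Real.volume_Icc]
    congr 1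
    ring
  -- boundedness of the Kantorovich means
  have hKbd : ∀ w : ℝ, 0 < w → ∀ t : ℝ,
      |(w / 2) * ∫ u in Set.Icc (t - 1 / w) (t + 1 / w), f u| ≤ Nf := by
    intro w hw t
    have hb : ‖∫ u in Set.Icc (t - 1 / w) (t + 1 / w), f u‖ ≤
        Nf * (volume (Set.Icc (t - 1 / w) (t + 1 / w))).toReal := by
      apply norm_setIntegral_le_of_norm_le_const
      · rw [hvol w hw t]; exact ENNReal.ofReal_lt_top
      · intro x _; rw [Real.norm_eq_abs]; exact hNf x
    rw [hvol w hw t, ENNReal.toReal_ofReal (by positivity)] at hb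
    rw [abs_mul, abs_of_nonneg (by positivity : (0:ℝ) ≤ w / 2)]
    calc w / 2 * |∫ u in Set.Icc (t - 1 / w) (t + 1 / w), f u|
        ≤ w / 2 * (Nf * (2 / w)) := by
          apply mul_le_mul_of_nonneg_left _ (by positivity)
          rw [← Real.norm_eq_abs]; exact hb
      _ = Nf := by field_simp
  -- vanishing of the Kantorovich means outside J
  have hK0 : ∀ w : ℝ, 1 ≤ w → ∀ t : ℝ, t ∉ Set.Icc (-γ1) γ1 →
      (w / 2) * ∫ u in Set.Icc (t - 1 / w) (t + 1 / w), f u = 0 := by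
    intro w hw t ht
    have hw0 : 0 < w := lt_of_lt_of_le one_pos hw
    have ht' : γ1 < |t| := by
      rw [Set.mem_Icc, not_and_or, not_le, not_le] at ht
      rcases ht with h | h
      · rw [lt_abs]; right; linarith
      · rw [lt_abs]; left; exact h
    have hz : (∫ u in Set.Icc (t - 1 / w) (t + 1 / w), f u) = 0 := by
      apply setIntegral_eq_zero_of_forall_eq_zero
      intro u hu
      apply hf0
      have h1 : |u - t| ≤ 1 / w := by
        rw [abs_le]
        exact ⟨by linarith [hu.1], by linarith [hu.2]⟩
      have h2 : (1:ℝ) / w ≤ 1 := by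
        rw [div_le_one hw0]; exact hw
      have h3 : |t| - |u - t| ≤ |u| := by
        have h4 := abs_sub_abs_le_abs_sub t u
        rw [abs_sub_comm t u] at h4
        linarith
      have : γ1 = ρ + 2 := hγ1_def
      linarith
    rw [hz, mul_zero]
  -- main ε-argument
  rw [Metric.tendsto_atTop]
  intro ε hε
  set C₁ : ℝ := φ (lam * Nf * M') / M' with hC₁_def
  have hC₁ : 0 ≤ C₁ :=
    div_nonneg (hφ_nonneg _ (by positivity)) hM'0.le
  set ε' : ℝ := (ε / 4) / (2 * γ1 * C₁ + 1) with hε'_def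
  have hden : (0:ℝ) < 2 * γ1 * C₁ + 1 := by nlinarith
  have hε'0 : 0 < ε' := by
    rw [hε'_def]; positivity
  obtain ⟨R, hR0, W₁, hW₁⟩ := hχ_tail ε' hε'0 γ1 hγ1
  set R' : ℝ := max R γ1 with hR'_def
  have hR'0 : 0 < R' := lt_of_lt_of_le hR0 (le_max_left _ _)
  have hγ1R' : γ1 ≤ R' := le_max_right _ _
  have hφlam : 0 ≤ φ lam := hφ_nonneg lam hlam.le
  have hden2 : (0:ℝ) < 2 * R' * φ lam + 1 := by nlinarith
  set δ : ℝ := min 1 ((ε / 4) / (2 * R' * φ lam + 1)) with hδ_def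
  have hδ0 : 0 < δ := lt_min one_pos (by positivity)
  have hδ1 : δ ≤ 1 := min_le_left _ _
  have hden3 : (0:ℝ) < 2 * M' + 2 * Nf + 1 := by nlinarith
  set η : ℝ := δ / (2 * M' + 2 * Nf + 1) with hη_def
  have hη0 : 0 < η := by rw [hη_def]; positivity
  obtain ⟨γ, hγ0, hγuc⟩ := huc η hη0
  obtain ⟨W₂, hW₂⟩ := hχ_conc γ hγ0 η hη0
  refine ⟨max (max W₁ W₂) (max 1 (2 / γ)), fun w hw => ?_⟩
  have hw1 : 1 ≤ w := le_trans (le_trans (le_max_left 1 (2 / γ)) (le_max_right _ _)) hw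
  have hw0 : 0 < w := lt_of_lt_of_le one_pos hw1
  have hwW₁ : W₁ ≤ w := le_trans (le_trans (le_max_left _ _) (le_max_left _ _)) hw
  have hwW₂ : W₂ ≤ w := le_trans (le_trans (le_max_right _ _) (le_max_left _ _)) hw
  have hwγ : 1 / w < γ := by
    have h2γ : 2 / γ ≤ w := le_trans (le_trans (le_max_right 1 (2 / γ)) (le_max_right _ _)) hw
    have h2 : 2 ≤ w * γ := by
      rw [div_le_iff₀ hγ0] at h2γ; linarith
    have h3 : 1 / w ≤ γ / 2 := by
      rw [div_le_div_iff₀ hw0 two_pos]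
      nlinarith
    linarith
  -- abbreviations for this fixed w
  set Kf : ℝ → ℝ := fun t => (w / 2) * ∫ u in Set.Icc (t - 1 / w) (t + 1 / w), f u with hKf_def
  set S : ℝ → ℝ := fun z => ∫ t, χw w (z - t) * Kf t with hS_def
  set J : Set ℝ := Set.Icc (-γ1) γ1 with hJ_def
  set tail : Set ℝ := {z : ℝ | R' ≤ |z|} with htail_def
  set T : ℝ → ℝ := fun z => ∫ t in J, |χw w (z - t)| with hT_def
  have hKbd' : ∀ t, |Kf t| ≤ Nf := hKbd w hw0
  have hKcont' : Continuous Kf := hKcont w hw0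
  have hK0' : ∀ t, t ∉ J → Kf t = 0 := hK0 w hw1
  have hJmeas : MeasurableSet J := measurableSet_Icc
  have htailmeas : MeasurableSet tail :=
    (isClosed_le continuous_const continuous_abs).measurableSet
  have hTnonneg : ∀ z, 0 ≤ T z := by
    intro z
    simp only [hT_def]
    exact integral_nonneg fun t => abs_nonneg _
  have hTM : ∀ z, T z ≤ M' := by
    intro z
    have h1 : T z ≤ ∫ t, |χw w (z - t)| := by
      simp only [hT_def]
      exact setIntegral_le_integral (hIntz w hw0 z).abs
        (Filter.Eventually.of_forall fun t => abs_nonneg _)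
    exact h1.trans ((hχ_abs w hw0 z).trans hMM')
  -- pointwise bound |S z| ≤ Nf * T z
  have hSbd : ∀ z, |S z| ≤ Nf * T z := by
    intro z
    have h0 : S z = ∫ t in J, χw w (z - t) * Kf t := by
      simp only [hS_def]
      exact (setIntegral_eq_integral_of_forall_compl_eq_zero
        (fun t ht => by rw [hK0' t ht, mul_zero])).symm
    rw [h0]
    have h1 : |∫ t in J, χw w (z - t) * Kf t| ≤ ∫ t in J, |χw w (z - t) * Kf t| := by
      simpa only [Real.norm_eq_abs] using
        norm_integral_le_integral_norm (μ := volume.restrict J)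
          (fun t => χw w (z - t) * Kf t)
    refine h1.trans ?_
    have h2 : (∫ t in J, |χw w (z - t) * Kf t|) ≤ ∫ t in J, |χw w (z - t)| * Nf := by
      apply integral_mono_of_nonneg (Filter.Eventually.of_forall fun t => abs_nonneg _)
        ((hIntz w hw0 z).abs.mul_const Nf).integrableOn
      refine Filter.Eventually.of_forall fun t => ?_
      show |χw w (z - t) * Kf t| ≤ |χw w (z - t)| * Nf
      rw [abs_mul]
      exact mul_le_mul_of_nonneg_left (hKbd' t) (abs_nonneg _)
    refine h2.trans ?_
    rw [integral_mul_const]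
    simp only [hT_def]
    exact le_of_eq (mul_comm _ _)
  -- the Kantorovich mean is uniformly close to f
  have hKη : ∀ t, |Kf t - f t| ≤ η := by
    intro t
    have h1w : 0 < 1 / w := by positivity
    have hci : IntegrableOn (fun _ : ℝ => f t) (Set.Icc (t - 1 / w) (t + 1 / w)) := by
      refine integrableOn_const ?_ enorm_ne_top
      rw [hvol w hw0 t]; exact ENNReal.ofReal_ne_top
    have hconst : (∫ _ in Set.Icc (t - 1 / w) (t + 1 / w), f t) = 2 / w * f t := by
      rw [setIntegral_const, measureReal_def, hvol w hw0 t, ENNReal.toReal_ofReal (by positivity), smul_eq_mul]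
    have hsub : Kf t - f t
        = w / 2 * ∫ u in Set.Icc (t - 1 / w) (t + 1 / w), (f u - f t) := by
      rw [integral_sub hfint.integrableOn hci, hconst, mul_sub]
      have h2 : w / 2 * (2 / w * f t) = f t := by field_simp
      rw [h2]
    rw [hsub, abs_mul, abs_of_nonneg (le_of_lt (div_pos hw0 two_pos))]
    have hptb : ∀ u ∈ Set.Icc (t - 1 / w) (t + 1 / w), ‖f u - f t‖ ≤ η := by
      intro u hu
      have hdu : dist u t < γ := by
        rw [Real.dist_eq]
        have h1 : |u - t| ≤ 1 / w := by
          rw [abs_le]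
          exact ⟨by linarith [hu.1], by linarith [hu.2]⟩
        linarith
      have h3 := hγuc hdu
      rw [Real.dist_eq] at h3
      rw [Real.norm_eq_abs]
      exact h3.le
    have hb := norm_setIntegral_le_of_norm_le_const
      (by rw [hvol w hw0 t]; exact ENNReal.ofReal_lt_top) hptb
    rw [measureReal_def, hvol w hw0 t, ENNReal.toReal_ofReal (le_of_lt (div_pos two_pos hw0))] at hb
    calc w / 2 * |∫ u in Set.Icc (t - 1 / w) (t + 1 / w), (f u - f t)|
        ≤ w / 2 * (η * (2 / w)) := by
          apply mul_le_mul_of_nonneg_left _ (le_of_lt (div_pos hw0 two_pos))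
          rw [← Real.norm_eq_abs]; exact hb
      _ = η * (w / 2 * (2 / w)) := by ring
      _ = η := by
          have hww : w / 2 * (2 / w) = 1 := by
            rw [div_mul_div_comm, mul_comm]
            exact div_self (mul_ne_zero two_ne_zero hw0.ne')
          rw [hww, mul_one]
  -- the main uniform estimate
  have hA : ∀ z, |S z - f z| ≤ δ := by
    intro z
    have hχz := hIntz w hw0 z
    have hKint : Integrable (fun t => χw w (z - t) * Kf t) := by
      apply Integrable.mono' (hχz.abs.mul_const Nf)
        (hχz.aestronglyMeasurable.mul hKcont'.aestronglyMeasurable)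
      refine Filter.Eventually.of_forall fun t => ?_
      show ‖χw w (z - t) * Kf t‖ ≤ |χw w (z - t)| * Nf
      rw [Real.norm_eq_abs, abs_mul]
      exact mul_le_mul_of_nonneg_left (hKbd' t) (abs_nonneg _)
    have e1 : S z - f z = ∫ t, χw w (z - t) * (Kf t - f z) := by
      have e2 : (fun t => χw w (z - t) * (Kf t - f z))
          = fun t => χw w (z - t) * Kf t - χw w (z - t) * f z := by
        funext t; ring
      rw [e2, integral_sub hKint (hχz.mul_const (f z)), integral_mul_const,
        hχ_norm w hw0 z, one_mul]
    have hbd2 : ∀ t : ℝ, |f t - f z| ≤ 2 * Nf := by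
      intro t
      calc |f t - f z| ≤ |f t| + |f z| := abs_sub _ _
        _ ≤ 2 * Nf := by linarith [hNf t, hNf z]
    have hint2 : Integrable (fun t => |χw w (z - t)| * |f t - f z|) := by
      apply Integrable.mono' (hχz.abs.mul_const (2 * Nf))
        (hχz.abs.aestronglyMeasurable.mul
          (((hf_cont.sub continuous_const).abs).aestronglyMeasurable))
      refine Filter.Eventually.of_forall fun t => ?_
      show ‖|χw w (z - t)| * |f t - f z|‖ ≤ |χw w (z - t)| * (2 * Nf)
      have hnn : (0:ℝ) ≤ |χw w (z - t)| * |f t - f z| :=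
        mul_nonneg (abs_nonneg _) (abs_nonneg _)
      rw [Real.norm_eq_abs, abs_of_nonneg hnn]
      exact mul_le_mul_of_nonneg_left (hbd2 t) (abs_nonneg _)
    have hbdint : Integrable (fun t => |χw w (z - t)| * (η + |f t - f z|)) := by
      apply Integrable.mono' (hχz.abs.mul_const (η + 2 * Nf))
        (hχz.abs.aestronglyMeasurable.mul
          ((continuous_const.add ((hf_cont.sub continuous_const).abs)).aestronglyMeasurable))
      refine Filter.Eventually.of_forall fun t => ?_
      show ‖|χw w (z - t)| * (η + |f t - f z|)‖ ≤ |χw w (z - t)| * (η + 2 * Nf)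
      have hnn : (0:ℝ) ≤ |χw w (z - t)| * (η + |f t - f z|) :=
        mul_nonneg (abs_nonneg _) (add_nonneg hη0.le (abs_nonneg _))
      rw [Real.norm_eq_abs, abs_of_nonneg hnn]
      apply mul_le_mul_of_nonneg_left _ (abs_nonneg _)
      linarith [hbd2 t]
    have step1 : |S z - f z| ≤ ∫ t, |χw w (z - t)| * (η + |f t - f z|) := by
      rw [e1]
      have h1 : |∫ t, χw w (z - t) * (Kf t - f z)|
          ≤ ∫ t, |χw w (z - t) * (Kf t - f z)| := by
        simpa only [Real.norm_eq_abs] using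
          norm_integral_le_integral_norm (fun t => χw w (z - t) * (Kf t - f z))
      refine h1.trans (integral_mono_of_nonneg
        (Filter.Eventually.of_forall fun t => abs_nonneg _) hbdint
        (Filter.Eventually.of_forall fun t => ?_))
      show |χw w (z - t) * (Kf t - f z)| ≤ |χw w (z - t)| * (η + |f t - f z|)
      rw [abs_mul]
      apply mul_le_mul_of_nonneg_left _ (abs_nonneg _)
      calc |Kf t - f z| ≤ |Kf t - f t| + |f t - f z| := abs_sub_le _ _ _
        _ ≤ η + |f t - f z| := by linarith [hKη t]
    have hsplit : (∫ t, |χw w (z - t)| * (η + |f t - f z|))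
        = (∫ t, |χw w (z - t)| * η) + ∫ t, |χw w (z - t)| * |f t - f z| := by
      rw [← integral_add (hχz.abs.mul_const η) hint2]
      congr 1; funext t; ring
    have hterm1 : (∫ t, |χw w (z - t)| * η) ≤ M' * η := by
      rw [integral_mul_const]
      exact mul_le_mul_of_nonneg_right ((hχ_abs w hw0 z).trans hMM') hη0.le
    have hsmeas : MeasurableSet {t : ℝ | γ ≤ |z - t|} :=
      (isClosed_le continuous_const ((continuous_const.sub continuous_id).abs)).measurableSet
    have hterm2 : (∫ t, |χw w (z - t)| * |f t - f z|) ≤ 2 * Nf * η + M' * η := by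
      rw [← integral_add_compl hsmeas hint2]
      have hpart1 : (∫ t in {t : ℝ | γ ≤ |z - t|}, |χw w (z - t)| * |f t - f z|)
          ≤ 2 * Nf * η := by
        calc (∫ t in {t : ℝ | γ ≤ |z - t|}, |χw w (z - t)| * |f t - f z|)
            ≤ ∫ t in {t : ℝ | γ ≤ |z - t|}, |χw w (z - t)| * (2 * Nf) := by
              apply integral_mono_of_nonneg
                (Filter.Eventually.of_forall fun t => mul_nonneg (abs_nonneg _) (abs_nonneg _))
                ((hχz.abs.mul_const (2 * Nf)).integrableOn)
                (Filter.Eventually.of_forall fun t => ?_)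
              show |χw w (z - t)| * |f t - f z| ≤ |χw w (z - t)| * (2 * Nf)
              exact mul_le_mul_of_nonneg_left (hbd2 t) (abs_nonneg _)
          _ = (∫ t in {t : ℝ | γ ≤ |z - t|}, |χw w (z - t)|) * (2 * Nf) :=
              integral_mul_const _ _
          _ ≤ η * (2 * Nf) :=
              mul_le_mul_of_nonneg_right (hW₂ w hwW₂ z).le (by positivity)
          _ = 2 * Nf * η := by ring
      have hpart2 : (∫ t in {t : ℝ | γ ≤ |z - t|}ᶜ, |χw w (z - t)| * |f t - f z|)
          ≤ M' * η := by
        calc (∫ t in {t : ℝ | γ ≤ |z - t|}ᶜ, |χw w (z - t)| * |f t - f z|)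
            ≤ ∫ t in {t : ℝ | γ ≤ |z - t|}ᶜ, |χw w (z - t)| * η := by
              apply integral_mono_of_nonneg
                (Filter.Eventually.of_forall fun t => mul_nonneg (abs_nonneg _) (abs_nonneg _))
                ((hχz.abs.mul_const η).integrableOn)
                (((ae_restrict_mem hsmeas.compl).mono fun t ht => ?_))
              show |χw w (z - t)| * |f t - f z| ≤ |χw w (z - t)| * η
              apply mul_le_mul_of_nonneg_left _ (abs_nonneg _)
              have h4 : |z - t| < γ := by
                have := ht
                simp only [Set.mem_compl_iff, Set.mem_setOf_eq, not_le] at this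
                exact this
              have hdu : dist t z < γ := by
                rw [Real.dist_eq, abs_sub_comm]
                exact h4
              have h5 := hγuc hdu
              rw [Real.dist_eq] at h5
              exact h5.le
          _ = (∫ t in {t : ℝ | γ ≤ |z - t|}ᶜ, |χw w (z - t)|) * η := integral_mul_const _ _
          _ ≤ M' * η := by
              apply mul_le_mul_of_nonneg_right _ hη0.le
              exact (setIntegral_le_integral hχz.abs
                (Filter.Eventually.of_forall fun t => abs_nonneg _)).trans
                ((hχ_abs w hw0 z).trans hMM')
      linarith
    calc |S z - f z| ≤ ∫ t, |χw w (z - t)| * (η + |f t - f z|) := step1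
      _ = (∫ t, |χw w (z - t)| * η) + ∫ t, |χw w (z - t)| * |f t - f z| := hsplit
      _ ≤ M' * η + (2 * Nf * η + M' * η) := add_le_add hterm1 hterm2
      _ = η * (2 * M' + 2 * Nf) := by ring
      _ ≤ δ := by
          rw [hη_def, div_mul_eq_mul_div, div_le_iff₀ hden3]
          nlinarith [hδ0.le]
  -- measurability of T
  have hmesJ : AEStronglyMeasurable (fun p : ℝ × ℝ => |χw w (p.1 - p.2)|)
      ((volume : Measure ℝ).prod (volume.restrict J)) := by
    have h3 : (volume : Measure ℝ).prod (volume.restrict J)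
        = ((volume : Measure ℝ).prod volume).restrict (Set.univ ×ˢ J) := by
      rw [← Measure.prod_restrict, Measure.restrict_univ]
    rw [h3]
    exact (continuous_abs.comp_aestronglyMeasurable (hmes w hw0)).restrict
  have hTsm : AEStronglyMeasurable T volume := by
    have := hmesJ.integral_prod_right'
    exact this
  have hTof : ∀ z, ENNReal.ofReal (T z) = ∫⁻ t in J, ENNReal.ofReal |χw w (z - t)| := by
    intro z
    simp only [hT_def]
    exact ofReal_integral_eq_lintegral_ofReal ((hIntz w hw0 z).abs.integrableOn)
      (Filter.Eventually.of_forall fun t => abs_nonneg _)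
  have hsecbound : ∀ t ∈ J, (∫ z in tail, |χw w (z - t)|) ≤ ε' := by
    intro t ht
    have hsub : tail ⊆ {z : ℝ | R ≤ |z|} := by
      intro z hz
      have hz' : R' ≤ |z| := hz
      exact le_trans (le_max_left R γ1) hz'
    have h1 : (∫ z in tail, |χw w (z - t)|) ≤ ∫ z in {z : ℝ | R ≤ |z|}, |χw w (z - t)| :=
      setIntegral_mono_set ((hIntz' w hw0 t).abs.integrableOn)
        (Filter.Eventually.of_forall fun z => abs_nonneg _)
        (HasSubset.Subset.eventuallyLE hsub)
    exact h1.trans (hW₁ w hwW₁ t ht).le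
  have hlin : (∫⁻ z in tail, ENNReal.ofReal (T z)) ≤ ENNReal.ofReal (ε' * (2 * γ1)) := by
    have hswap : (∫⁻ z in tail, ∫⁻ t in J, ENNReal.ofReal |χw w (z - t)|)
        = ∫⁻ t in J, ∫⁻ z in tail, ENNReal.ofReal |χw w (z - t)| := by
      apply lintegral_lintegral_swap
      have h4 : AEMeasurable (fun p : ℝ × ℝ => ENNReal.ofReal |χw w (p.1 - p.2)|)
          (((volume : Measure ℝ).prod volume)) :=
        ENNReal.measurable_ofReal.comp_aemeasurable
          (continuous_abs.measurable.comp_aemeasurable (hmes w hw0).aemeasurable)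
      have h3 : (volume.restrict tail).prod (volume.restrict J)
          = ((volume : Measure ℝ).prod volume).restrict (tail ×ˢ J) :=
        Measure.prod_restrict _ _
      have h5 := h4.restrict (s := tail ×ˢ J)
      rw [← h3] at h5
      exact h5
    calc (∫⁻ z in tail, ENNReal.ofReal (T z))
        = ∫⁻ z in tail, ∫⁻ t in J, ENNReal.ofReal |χw w (z - t)| := by
          apply lintegral_congr
          intro z
          exact hTof z
      _ = ∫⁻ t in J, ∫⁻ z in tail, ENNReal.ofReal |χw w (z - t)| := hswap
      _ ≤ ∫⁻ t in J, ENNReal.ofReal ε' := by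
          refine lintegral_mono_ae (((ae_restrict_mem hJmeas).mono fun t ht => ?_))
          rw [← ofReal_integral_eq_lintegral_ofReal ((hIntz' w hw0 t).abs.integrableOn)
            (Filter.Eventually.of_forall fun z => abs_nonneg _)]
          exact ENNReal.ofReal_le_ofReal (hsecbound t ht)
      _ = ENNReal.ofReal ε' * volume J := setLIntegral_const J _
      _ = ENNReal.ofReal (ε' * (2 * γ1)) := by
          have hJvol : volume J = ENNReal.ofReal (2 * γ1) := by
            simp only [hJ_def]
            rw [Real.volume_Icc]
            congr 1
            ring
          rw [hJvol, ← ENNReal.ofReal_mul hε'0.le]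
  have hTinttail : IntegrableOn T tail := by
    constructor
    · exact hTsm.restrict
    · rw [hasFiniteIntegral_iff_ofReal (Filter.Eventually.of_forall fun z => hTnonneg z)]
      exact lt_of_le_of_lt hlin ENNReal.ofReal_lt_top
  have hTtail_int_le : (∫ z in tail, T z) ≤ ε' * (2 * γ1) := by
    rw [← ENNReal.ofReal_le_ofReal_iff (by positivity)]
    rw [ofReal_integral_eq_lintegral_ofReal hTinttail
      (Filter.Eventually.of_forall fun z => hTnonneg z)]
    exact hlin
  -- the dominating function
  set D₁ : ℝ → ℝ := (Set.Icc (-R') R').indicator (fun _ => φ (lam * δ)) with hD₁_def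
  set D₂ : ℝ → ℝ := tail.indicator (fun z => C₁ * T z) with hD₂_def
  have hD₁int : Integrable D₁ := by
    rw [hD₁_def, integrable_indicator_iff measurableSet_Icc]
    refine integrableOn_const ?_ enorm_ne_top
    rw [Real.volume_Icc]; exact ENNReal.ofReal_ne_top
  have hD₂int : Integrable D₂ := by
    rw [hD₂_def, integrable_indicator_iff htailmeas]
    exact hTinttail.const_mul C₁
  have hφδ_nonneg : 0 ≤ φ (lam * δ) := hφ_nonneg _ (mul_nonneg hlam.le hδ0.le)
  -- pointwise domination
  have hpt : ∀ z, φ (lam * |S z - f z|) ≤ D₁ z + D₂ z := by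
    intro z
    rcases le_or_gt R' |z| with hz | hz
    · have hz1 : z ∈ tail := hz
      have hfz : f z = 0 := by
        apply hf0
        have h1 : γ1 = ρ + 2 := hγ1_def
        linarith [hγ1R']
      have h1 : φ (lam * |S z - f z|) ≤ C₁ * T z := by
        rw [hfz, sub_zero]
        have hb1 : lam * |S z| ≤ lam * (Nf * T z) :=
          mul_le_mul_of_nonneg_left (hSbd z) hlam.le
        have h2 : φ (lam * |S z|) ≤ φ (lam * (Nf * T z)) :=
          hφ_mono (Set.mem_Ici.2 (mul_nonneg hlam.le (abs_nonneg _)))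
            (Set.mem_Ici.2 (mul_nonneg hlam.le (mul_nonneg hNf0.le (hTnonneg z)))) hb1
        have h3 : lam * (Nf * T z) = (T z / M') * (lam * Nf * M') := by
          field_simp
        have h4 : φ ((T z / M') * (lam * Nf * M')) ≤ (T z / M') * φ (lam * Nf * M') :=
          hφ_scale _ (by positivity) _ (div_nonneg (hTnonneg z) hM'0.le)
            (by rw [div_le_one hM'0]; exact hTM z)
        have h5 : (T z / M') * φ (lam * Nf * M') = C₁ * T z := by
          rw [hC₁_def]
          field_simp
        calc φ (lam * |S z|) ≤ φ (lam * (Nf * T z)) := h2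
          _ = φ ((T z / M') * (lam * Nf * M')) := by rw [h3]
          _ ≤ (T z / M') * φ (lam * Nf * M') := h4
          _ = C₁ * T z := h5
      have hD₁z : 0 ≤ D₁ z := Set.indicator_nonneg (fun _ _ => hφδ_nonneg) z
      have hD₂z : D₂ z = C₁ * T z := by
        rw [hD₂_def, Set.indicator_of_mem hz1]
      linarith
    · have hz1 : z ∈ Set.Icc (-R') R' := by
        rw [Set.mem_Icc]
        exact abs_le.1 hz.le
      have h1 : φ (lam * |S z - f z|) ≤ φ (lam * δ) :=
        hφ_mono (Set.mem_Ici.2 (mul_nonneg hlam.le (abs_nonneg _)))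
          (Set.mem_Ici.2 (mul_nonneg hlam.le hδ0.le))
          (mul_le_mul_of_nonneg_left (hA z) hlam.le)
      have hD₁z : D₁ z = φ (lam * δ) := by
        rw [hD₁_def, Set.indicator_of_mem hz1]
      have hD₂z : 0 ≤ D₂ z :=
        Set.indicator_nonneg (fun x _ => mul_nonneg hC₁ (hTnonneg x)) z
      linarith
  -- integral bounds for the dominating function
  have hID₁ : (∫ z, D₁ z) ≤ ε / 4 := by
    have h1 : (∫ z, D₁ z) = (volume (Set.Icc (-R') R')).toReal • φ (lam * δ) := by
      simp only [hD₁_def]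
      exact integral_indicator_const _ measurableSet_Icc
    rw [h1, Real.volume_Icc, ENNReal.toReal_ofReal (by linarith), smul_eq_mul]
    have h2 : φ (lam * δ) ≤ δ * φ lam := by
      have := hφ_scale lam hlam.le δ hδ0.le hδ1
      rw [mul_comm lam δ]
      exact this
    have h3 : δ ≤ (ε / 4) / (2 * R' * φ lam + 1) := min_le_right _ _
    have h4 : δ * (2 * R' * φ lam + 1) ≤ ε / 4 := by
      rw [← le_div_iff₀ hden2]
      exact h3
    have h5 : (R' - -R') = 2 * R' := by ring
    rw [h5]
    nlinarith [hδ0.le, hφδ_nonneg]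
  have hID₂ : (∫ z, D₂ z) ≤ ε / 4 := by
    have h1 : (∫ z, D₂ z) = ∫ z in tail, C₁ * T z := by
      simp only [hD₂_def]
      exact integral_indicator htailmeas
    rw [h1, integral_const_mul]
    have h2 : C₁ * (∫ z in tail, T z) ≤ C₁ * (ε' * (2 * γ1)) :=
      mul_le_mul_of_nonneg_left hTtail_int_le hC₁
    have heq : ε' * (2 * γ1 * C₁ + 1) = ε / 4 := by
      rw [hε'_def]
      field_simp
    nlinarith [hε'0.le, hC₁, hγ1.le]
  -- conclusion
  have hI0 : 0 ≤ ∫ z, φ (lam * |S z - f z|) :=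
    integral_nonneg fun z => hφ_nonneg _ (mul_nonneg hlam.le (abs_nonneg _))
  have hIle : (∫ z, φ (lam * |S z - f z|)) ≤ (∫ z, D₁ z) + ∫ z, D₂ z := by
    rw [← integral_add hD₁int hD₂int]
    exact integral_mono_of_nonneg
      (Filter.Eventually.of_forall fun z => hφ_nonneg _ (mul_nonneg hlam.le (abs_nonneg _)))
      (hD₁int.add hD₂int) (Filter.Eventually.of_forall hpt)
  have hfinal : dist (∫ z, φ (lam * |S z - f z|)) 0 < ε := by
    rw [Real.dist_eq, sub_zero, abs_of_nonneg hI0]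
    calc (∫ z, φ (lam * |S z - f z|)) ≤ (∫ z, D₁ z) + ∫ z, D₂ z := hIle
      _ ≤ ε / 4 + ε / 4 := add_le_add hID₁ hID₂
      _ < ε := by linarith
  simpa only [hS_def, hKf_def] using hfinal
end

section
/- Let χ ∈ L¹(ℝ) be bounded with ∑_{k∈ℤ} χ(u − k) = 1 for all u ∈ ℝ and sup_u ∑_{k∈ℤ} |χ(u − k)| = M < ∞, and suppose for every γ > 0, ∑_{|u−k| ≥ γ w} |χ(u − k)| → 0 as w → ∞ uniformly in u. Then for every bounded uniformly continuous f : ℝ → ℝ, the Kantorovich sampling series S_w f(z) = ∑_{k∈ℤ} χ(wz − k) · w ∫_{k/w}^{(k+1)/w} f(u) du converges to f uniformly on ℝ as w → ∞. -/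
open MeasureTheory Filter

/-- uniform convergence of the sampling Kantorovich series
`S_w f(z) = ∑_k χ(wz - k) · w ∫_{k/w}^{(k+1)/w} f` for bounded uniformly
continuous `f`. -/
theorem sampling_kantorovich_uniform_convergence
    (χ f : ℝ → ℝ) (M : ℝ)
    (hχ_int : Integrable χ)
    (hχ_bdd : ∃ K, ∀ u, |χ u| ≤ K)
    (hχ_part : ∀ u : ℝ, ∑' k : ℤ, χ (u - k) = 1)
    (hχ_abs : ∀ u : ℝ, ∑' k : ℤ, |χ (u - k)| ≤ M)
    (hχ_summ : ∀ u : ℝ, Summable (fun k : ℤ => |χ (u - k)|))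
    (hχ_conc : ∀ γ > (0:ℝ), ∀ ε > (0:ℝ), ∃ W : ℝ, ∀ w ≥ W, ∀ u : ℝ,
      ∑' k : {k : ℤ // γ * w ≤ |u - k|}, |χ (u - (k : ℤ))| < ε)
    (hf_bdd : ∃ C, ∀ x, |f x| ≤ C)
    (hf_uc : UniformContinuous f) :
    ∀ ε > (0:ℝ), ∃ W : ℝ, ∀ w ≥ W, ∀ z : ℝ,
      |(∑' k : ℤ, χ (w * z - k) *
          (w * ∫ u in Set.Icc ((k : ℝ) / w) ((k + 1 : ℝ) / w), f u)) - f z| < ε := by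
  obtain ⟨C₀, hC₀⟩ := hf_bdd
  set C : ℝ := max C₀ 0 with hCdef
  have hCnn : 0 ≤ C := le_max_right _ _
  have hfC : ∀ x, |f x| ≤ C := fun x => (hC₀ x).trans (le_max_left _ _)
  have hM0 : 0 ≤ M := le_trans (tsum_nonneg (fun k => abs_nonneg _)) (hχ_abs 0)
  have hfc : Continuous f := hf_uc.continuous
  intro ε hε
  set ε₁ : ℝ := ε / (2 * (M + 1)) with hε₁def
  set ε₂ : ℝ := ε / (2 * (2 * C + 1)) with hε₂def
  have hε₁ : 0 < ε₁ := by positivity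
  have hε₂ : 0 < ε₂ := by positivity
  obtain ⟨δ, hδ, hδf⟩ := Metric.uniformContinuous_iff.mp hf_uc ε₁ hε₁
  obtain ⟨W₁, hW₁⟩ := hχ_conc (δ / 2) (by positivity) ε₂ hε₂
  refine ⟨max W₁ (max 1 (3 / δ)), fun w hw z => ?_⟩
  have hw1 : (1:ℝ) ≤ w := le_trans (le_trans (le_max_left _ _) (le_max_right _ _)) hw
  have hw0 : (0:ℝ) < w := lt_of_lt_of_le one_pos hw1
  have hwδ : 3 / δ ≤ w := le_trans (le_trans (le_max_right _ _) (le_max_right _ _)) hw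
  have hwW₁ : W₁ ≤ w := le_trans (le_max_left _ _) hw
  set x : ℝ := w * z with hxdef
  set b : ℤ → ℝ := fun k => w * ∫ u in Set.Icc ((k : ℝ) / w) ((k + 1 : ℝ) / w), f u with hbdef
  -- length of the interval
  have hlen : ∀ k : ℤ, (volume (Set.Icc ((k:ℝ)/w) ((k + 1 : ℝ)/w))).toReal = 1/w := by
    intro k
    have h1 : ((k:ℝ) + 1)/w - (k:ℝ)/w = 1/w := by field_simp; ring
    rw [Real.volume_Icc, h1, ENNReal.toReal_ofReal (by positivity)]
  have hvolfin : ∀ k : ℤ, volume (Set.Icc ((k:ℝ)/w) ((k + 1 : ℝ)/w)) < ⊤ := fun k =>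
    measure_Icc_lt_top
  -- |b k| ≤ C
  have hbC : ∀ k : ℤ, |b k| ≤ C := by
    intro k
    have h2 : ‖∫ u in Set.Icc ((k:ℝ)/w) ((k + 1 : ℝ)/w), f u‖ ≤ C * (1/w) := by
      have := norm_setIntegral_le_of_norm_le_const (μ := volume)
        (s := Set.Icc ((k:ℝ)/w) ((k + 1 : ℝ)/w)) (C := C) (f := f) (hvolfin k)
        (fun u _ => by rw [Real.norm_eq_abs]; exact hfC u)
      rwa [measureReal_def, hlen k] at this
    rw [hbdef]
    simp only []
    rw [abs_mul, abs_of_pos hw0]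
    calc w * |∫ u in Set.Icc ((k:ℝ)/w) ((k + 1 : ℝ)/w), f u| ≤ w * (C * (1/w)) := by
          exact mul_le_mul_of_nonneg_left h2 hw0.le
      _ = C := by field_simp
  -- b k - f z = w * ∫ (f u - f z)
  have hbsub : ∀ k : ℤ, b k - f z
      = w * ∫ u in Set.Icc ((k:ℝ)/w) ((k + 1 : ℝ)/w), (f u - f z) := by
    intro k
    have hint : IntegrableOn f (Set.Icc ((k:ℝ)/w) ((k + 1 : ℝ)/w)) volume :=
      hfc.integrableOn_Icc
    have hintc : IntegrableOn (fun _ : ℝ => f z) (Set.Icc ((k:ℝ)/w) ((k + 1 : ℝ)/w)) volume :=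
      integrableOn_const (hvolfin k).ne
    rw [integral_sub hint hintc, setIntegral_const, measureReal_def, hlen k, smul_eq_mul, mul_sub]
    rw [hbdef]
    have : w * (1/w * f z) = f z := by field_simp
    rw [this]
  -- near estimate
  have hnear : ∀ k : ℤ, |x - k| < δ/2 * w → |b k - f z| ≤ ε₁ := by
    intro k hk
    rw [hbsub k]
    have h2 : ‖∫ u in Set.Icc ((k:ℝ)/w) ((k + 1 : ℝ)/w), (f u - f z)‖ ≤ ε₁ * (1/w) := by
      have := norm_setIntegral_le_of_norm_le_const (μ := volume)
        (s := Set.Icc ((k:ℝ)/w) ((k + 1 : ℝ)/w)) (C := ε₁) (f := fun u => f u - f z)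
        (hvolfin k) ?_
      · rwa [measureReal_def, hlen k] at this
      · intro u hu
        rw [Real.norm_eq_abs]
        have hu1 : (k:ℝ)/w ≤ u := hu.1
        have hu2 : u ≤ ((k:ℝ) + 1)/w := hu.2
        have hkz : |(k:ℝ)/w - z| < δ/2 := by
          have heq : (k:ℝ)/w - z = ((k:ℝ) - x)/w := by
            rw [hxdef]; field_simp
          rw [heq, abs_div, abs_of_pos hw0, div_lt_iff₀ hw0, abs_sub_comm]
          exact hk
        have hsum : ((k:ℝ)+1)/w = (k:ℝ)/w + 1/w := add_div _ _ _
        have huk : |u - (k:ℝ)/w| ≤ 1/w := by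
          rw [abs_of_nonneg (by linarith)]
          linarith
        have h1w : 1/w ≤ δ/3 := by
          rw [div_le_div_iff₀ hw0 (by norm_num : (0:ℝ) < 3)]
          have h3 : 3/δ * δ ≤ w * δ := mul_le_mul_of_nonneg_right hwδ hδ.le
          rw [div_mul_cancel₀ _ (ne_of_gt hδ)] at h3
          linarith
        have huz : |u - z| < δ := by
          calc |u - z| ≤ |u - (k:ℝ)/w| + |(k:ℝ)/w - z| := abs_sub_le _ _ _
            _ < 1/w + δ/2 := by linarith
            _ ≤ δ/3 + δ/2 := by linarith
            _ < δ := by linarith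
        have := hδf (show dist u z < δ by rwa [Real.dist_eq])
        rw [Real.dist_eq] at this
        exact this.le
    rw [abs_mul, abs_of_pos hw0]
    calc w * |∫ u in Set.Icc ((k:ℝ)/w) ((k + 1 : ℝ)/w), (f u - f z)| ≤ w * (ε₁ * (1/w)) :=
        mul_le_mul_of_nonneg_left h2 hw0.le
      _ = ε₁ := by field_simp
  -- |b k - f z| ≤ 2C always
  have hb2C : ∀ k : ℤ, |b k - f z| ≤ 2 * C := by
    intro k
    calc |b k - f z| ≤ |b k| + |f z| := abs_sub _ _
      _ ≤ C + C := add_le_add (hbC k) (hfC z)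
      _ = 2 * C := by ring
  -- summability facts
  have hSa : Summable (fun k : ℤ => |χ (x - k)|) := hχ_summ x
  have hSχ : Summable (fun k : ℤ => χ (x - k)) := hSa.of_abs
  have hSh : Summable (fun k : ℤ => |χ (x - k)| * |b k - f z|) := by
    apply Summable.of_nonneg_of_le (fun k => by positivity)
      (fun k => mul_le_mul_of_nonneg_left (hb2C k) (abs_nonneg _))
    exact hSa.mul_right _
  have hSg : Summable (fun k : ℤ => χ (x - k) * (b k - f z)) := by
    apply Summable.of_abs
    have : (fun k : ℤ => |χ (x - k) * (b k - f z)|)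
        = fun k : ℤ => |χ (x - k)| * |b k - f z| := by
      funext k; rw [abs_mul]
    rw [this]; exact hSh
  have hSgb : Summable (fun k : ℤ => χ (x - k) * b k) := by
    apply Summable.of_abs
    apply Summable.of_nonneg_of_le (fun k => abs_nonneg _)
      (fun k => ?_) (hSa.mul_right C)
    rw [abs_mul]
    exact mul_le_mul_of_nonneg_left (hbC k) (abs_nonneg _)
  -- the key decomposition
  have hdecomp : (∑' k : ℤ, χ (x - k) * b k) - f z
      = ∑' k : ℤ, χ (x - k) * (b k - f z) := by
    have h1 : ∀ k : ℤ, χ (x - k) * b k = χ (x - k) * (b k - f z) + χ (x - k) * f z := by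
      intro k; ring
    have h2 : (∑' k : ℤ, χ (x - k) * b k)
        = (∑' k : ℤ, χ (x - k) * (b k - f z)) + (∑' k : ℤ, χ (x - k) * f z) := by
      rw [← Summable.tsum_add hSg (hSχ.mul_right _)]
      exact tsum_congr h1
    rw [h2, tsum_mul_right, hχ_part x]
    ring
  -- the goal as a tsum
  rw [hdecomp]
  -- bound |tsum| by tsum of abs
  have habs : |∑' k : ℤ, χ (x - k) * (b k - f z)|
      ≤ ∑' k : ℤ, |χ (x - k)| * |b k - f z| := by
    have := norm_tsum_le_tsum_norm (f := fun k : ℤ => χ (x - k) * (b k - f z)) ?_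
    · rw [Real.norm_eq_abs] at this
      refine this.trans (le_of_eq (tsum_congr fun k => ?_))
      rw [Real.norm_eq_abs, abs_mul]
    · have : (fun k : ℤ => ‖χ (x - k) * (b k - f z)‖)
          = fun k : ℤ => |χ (x - k)| * |b k - f z| := by
        funext k; rw [Real.norm_eq_abs, abs_mul]
      rw [this]; exact hSh
  -- split into near and far parts
  set s : Set ℤ := {k : ℤ | δ/2 * w ≤ |x - k|} with hsdef
  have hsplit := hSh.tsum_subtype_add_tsum_subtype_compl s
  -- far part bound
  have hfar : (∑' k : ↑s, |χ (x - (k:ℤ))| * |b k - f z|) ≤ 2 * C * ε₂ := by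
    have hconc : (∑' k : {k : ℤ // δ/2 * w ≤ |x - k|}, |χ (x - (k:ℤ))|) < ε₂ :=
      hW₁ w hwW₁ x
    have hsub : Summable (fun k : ↑s => |χ (x - (k:ℤ))|) := hSa.subtype s
    calc (∑' k : ↑s, |χ (x - (k:ℤ))| * |b k - f z|)
        ≤ ∑' k : ↑s, |χ (x - (k:ℤ))| * (2 * C) := by
          refine Summable.tsum_le_tsum (f := fun k : ↑s => |χ (x - (k:ℤ))| * |b k - f z|)
            (g := fun k : ↑s => |χ (x - (k:ℤ))| * (2 * C))
            (fun k => mul_le_mul_of_nonneg_left (hb2C k) (abs_nonneg _)) ?_ ?_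
          · exact hSh.subtype s
          · exact (hSa.subtype s).mul_right _
      _ = (∑' k : ↑s, |χ (x - (k:ℤ))|) * (2 * C) := tsum_mul_right
      _ ≤ ε₂ * (2 * C) := mul_le_mul_of_nonneg_right hconc.le (by positivity)
      _ = 2 * C * ε₂ := by ring
  -- near part bound
  have hnearsum : (∑' k : ↑sᶜ, |χ (x - (k:ℤ))| * |b k - f z|) ≤ M * ε₁ := by
    have hsub : Summable (fun k : ↑sᶜ => |χ (x - (k:ℤ))|) := hSa.subtype _
    have hle : (∑' k : ↑sᶜ, |χ (x - (k:ℤ))|) ≤ M := by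
      have h1 := hSa.tsum_subtype_add_tsum_subtype_compl s
      have h2 : (0:ℝ) ≤ ∑' k : ↑s, |χ (x - (k:ℤ))| := tsum_nonneg (fun k => abs_nonneg _)
      have h3 := hχ_abs x
      linarith
    calc (∑' k : ↑sᶜ, |χ (x - (k:ℤ))| * |b k - f z|)
        ≤ ∑' k : ↑sᶜ, |χ (x - (k:ℤ))| * ε₁ := by
          refine Summable.tsum_le_tsum (f := fun k : ↑sᶜ => |χ (x - (k:ℤ))| * |b k - f z|)
            (g := fun k : ↑sᶜ => |χ (x - (k:ℤ))| * ε₁) ?_ ?_ ?_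
          · rintro ⟨k, hk⟩
            have hk' : |x - k| < δ/2 * w := not_le.mp hk
            exact mul_le_mul_of_nonneg_left (hnear k hk') (abs_nonneg _)
          · exact hSh.subtype _
          · exact (hSa.subtype _).mul_right _
      _ = (∑' k : ↑sᶜ, |χ (x - (k:ℤ))|) * ε₁ := tsum_mul_right
      _ ≤ M * ε₁ := mul_le_mul_of_nonneg_right hle hε₁.le
  -- conclude
  have keyM : ε₁ * (2 * (M + 1)) = ε := div_mul_cancel₀ ε (by positivity)
  have keyC : ε₂ * (2 * (2 * C + 1)) = ε := div_mul_cancel₀ ε (by positivity)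
  have h2CM : 2 * C * ε₂ + M * ε₁ < ε := by nlinarith [hε₁, hε₂, hCnn, hM0]
  calc |∑' k : ℤ, χ (x - k) * (b k - f z)|
      ≤ ∑' k : ℤ, |χ (x - k)| * |b k - f z| := habs
    _ = (∑' k : ↑s, |χ (x - (k:ℤ))| * |b k - f z|)
        + (∑' k : ↑sᶜ, |χ (x - (k:ℤ))| * |b k - f z|) := hsplit.symm
    _ ≤ 2 * C * ε₂ + M * ε₁ := add_le_add hfar hnearsum
    _ < ε := h2CM
end
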